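/- Let (Ω, 𝔄, P) be a probability space, n₀ ≥ 1 a natural number, r > 0, p ∈ [0,1], q ∈ [0,1], p₂ ∈ [0,1], v ≥ 0 real numbers. Let N₁ be a square-integrable random variable with E[N₁] = n₀·p and Var(N₁) = n₀·p·(1−p), let Y be a square-integrable random variable such that, almost surely, E[Y | σ(N₁)] = r·q·N₁ and E[Y² | σ(N₁)] − (E[Y | σ(N₁)])² = v·N₁, and let S be a square-integrable random variable independent of Y with Var(S) = n₀·p₂·(1−p₂). Then Var(Y/(n₀·r) + S/n₀) = q²·p·(1−p)/n₀ + p·v/(n₀·r²) + p₂·(1−p₂)/n₀. -/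

import Mathlib

open MeasureTheory ProbabilityTheory

/-- Equation (10) of the paper: variance of the two-level g-MLSS estimator with
level-skipping, `Var(Y/(n₀·r) + S/n₀) = q²·p·(1−p)/n₀ + p·v/(n₀·r²) + p₂·(1−p₂)/n₀`,
where `Y` counts target hits from non-skipping paths and `S` counts target hits
from level-skipping paths, independent of `Y`. -/
theorem stmt_10 {Ω : Type*} [m0 : MeasurableSpace Ω] (μ : Measure Ω) [IsProbabilityMeasure μ]
    (n₀ : ℕ) (hn₀ : 1 ≤ n₀) (r : ℝ) (hr : 0 < r)
    (p : ℝ) (hp : p ∈ Set.Icc (0 : ℝ) 1) (q : ℝ) (hq : q ∈ Set.Icc (0 : ℝ) 1)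
    (p₂ : ℝ) (hp₂ : p₂ ∈ Set.Icc (0 : ℝ) 1) (v : ℝ) (hv : 0 ≤ v)
    (N₁ : Ω → ℝ) (hN₁meas : Measurable N₁) (hN₁L2 : MemLp N₁ 2 μ)
    (hN₁mean : ∫ ω, N₁ ω ∂μ = (n₀ : ℝ) * p)
    (hN₁var : variance N₁ μ = (n₀ : ℝ) * p * (1 - p))
    (Y : Ω → ℝ) (hYL2 : MemLp Y 2 μ)
    (hcondmean : MeasureTheory.condExp (MeasurableSpace.comap N₁ Real.measurableSpace) μ Y
      =ᵐ[μ] fun ω => r * q * N₁ ω)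
    (hcondvar : (fun ω =>
        MeasureTheory.condExp (MeasurableSpace.comap N₁ Real.measurableSpace) μ
            (fun ω' => (Y ω') ^ 2) ω -
          (MeasureTheory.condExp (MeasurableSpace.comap N₁ Real.measurableSpace) μ Y ω) ^ 2)
      =ᵐ[μ] fun ω => v * N₁ ω)
    (S : Ω → ℝ) (hSL2 : MemLp S 2 μ) (hSindep : IndepFun Y S μ)
    (hSvar : variance S μ = (n₀ : ℝ) * p₂ * (1 - p₂)) :
    variance (fun ω => Y ω / ((n₀ : ℝ) * r) + S ω / (n₀ : ℝ)) μ =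
      q ^ 2 * p * (1 - p) / (n₀ : ℝ) + p * v / ((n₀ : ℝ) * r ^ 2) +
        p₂ * (1 - p₂) / (n₀ : ℝ) := by
  have hn : (0 : ℝ) < (n₀ : ℝ) := by exact_mod_cast hn₀
  set m := MeasurableSpace.comap N₁ Real.measurableSpace with hmdef
  have hm : m ≤ m0 := hN₁meas.comap_le
  have hN₁int : Integrable N₁ μ := hN₁L2.integrable one_le_two
  have hN₁sq : Integrable (fun ω => N₁ ω ^ 2) μ := hN₁L2.integrable_sq
  -- E[Y]
  have hEY : ∫ ω, Y ω ∂μ = r * q * ((n₀ : ℝ) * p) := by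
    rw [← integral_condExp hm (f := Y), integral_congr_ae hcondmean,
      integral_const_mul, hN₁mean]
  -- E[Y²]
  have hcondsq : MeasureTheory.condExp m μ (fun ω' => (Y ω') ^ 2)
      =ᵐ[μ] fun ω => v * N₁ ω + (r * q) ^ 2 * N₁ ω ^ 2 := by
    filter_upwards [hcondvar, hcondmean] with ω h1 h2
    have : MeasureTheory.condExp m μ (fun ω' => (Y ω') ^ 2) ω
        = v * N₁ ω + (MeasureTheory.condExp m μ Y ω) ^ 2 := by linarith
    rw [this, h2]; ring
  have hEY2 : ∫ ω, (Y ω) ^ 2 ∂μ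
      = v * ((n₀ : ℝ) * p) + (r * q) ^ 2 * ∫ ω, N₁ ω ^ 2 ∂μ := by
    rw [← integral_condExp hm (f := fun ω => (Y ω) ^ 2), integral_congr_ae hcondsq,
      integral_add (hN₁int.const_mul v) (hN₁sq.const_mul _),
      integral_const_mul, integral_const_mul, hN₁mean]
  have hVarN₁ : ∫ ω, N₁ ω ^ 2 ∂μ - (∫ ω, N₁ ω ∂μ) ^ 2 = (n₀ : ℝ) * p * (1 - p) := by
    rw [← hN₁var, variance_eq_sub hN₁L2]; rfl
  have hVarY : variance Y μ = v * ((n₀ : ℝ) * p)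
      + (r * q) ^ 2 * ((n₀ : ℝ) * p * (1 - p)) := by
    rw [variance_eq_sub hYL2]
    have : (μ[(Y ^ 2 : Ω → ℝ)]) = ∫ ω, (Y ω) ^ 2 ∂μ := rfl
    rw [this, hEY2]
    have : (μ[Y]) = ∫ ω, Y ω ∂μ := rfl
    rw [this, hEY, ← hVarN₁, hN₁mean]
    ring
  -- scaled variables
  have hYc : MemLp (fun ω => ((n₀ : ℝ) * r)⁻¹ * Y ω) 2 μ := hYL2.const_mul _
  have hSc : MemLp (fun ω => ((n₀ : ℝ))⁻¹ * S ω) 2 μ := hSL2.const_mul _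
  have hindep : IndepFun (fun ω => ((n₀ : ℝ) * r)⁻¹ * Y ω)
      (fun ω => ((n₀ : ℝ))⁻¹ * S ω) μ :=
    hSindep.comp (measurable_const_mul _) (measurable_const_mul _)
  have heq : (fun ω => Y ω / ((n₀ : ℝ) * r) + S ω / (n₀ : ℝ))
      = (fun ω => ((n₀ : ℝ) * r)⁻¹ * Y ω) + (fun ω => ((n₀ : ℝ))⁻¹ * S ω) := by
    funext ω; simp [div_eq_inv_mul]
  rw [heq, hindep.variance_add hYc hSc]
  have h1 : variance (fun ω => ((n₀ : ℝ) * r)⁻¹ * Y ω) μ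
      = (((n₀ : ℝ) * r)⁻¹) ^ 2 * variance Y μ := variance_const_mul _ _ _
  have h2 : variance (fun ω => ((n₀ : ℝ))⁻¹ * S ω) μ
      = (((n₀ : ℝ))⁻¹) ^ 2 * variance S μ := variance_const_mul _ _ _
  rw [h1, h2, hVarY, hSvar]
  field_simp
  ring
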